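/- Let k and m be positive integers with k dividing m, let p = m/k, and let α ∈ [0,1). Let B = (1−α) I_p + α J_p ∈ ℝ^{p×p}, where J_p is the p×p all-ones matrix, and let A ∈ ℝ^{m×m} be the block-diagonal matrix with k diagonal blocks all equal to B. Then inf{‖A − M‖_F : M ∈ ℝ^{m×m}, rank(M) ≤ k} = (1 − α)·√(m − k). -/

import Mathlib

open Matrix

/-- The squared Frobenius norm of a real matrix. -/
noncomputable def frobSq {m n : Type*} [Fintype m] [Fintype n]
    (M : Matrix m n ℝ) : ℝ :=
  ∑ i, ∑ j, (M i j) ^ 2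

/-- The Frobenius norm of a real matrix. -/
noncomputable def frobNorm {m n : Type*} [Fintype m] [Fintype n]
    (M : Matrix m n ℝ) : ℝ :=
  Real.sqrt (frobSq M)

lemma sum_mulVec_sq_le_frobSq {n : Type*} [Fintype n]
    (X : Matrix n n ℝ) {ι : Type*} [Fintype ι] (v : ι → EuclideanSpace ℝ n)
    (hv : Orthonormal ℝ v) :
    ∑ j, ∑ i, (X.mulVec (v j) i) ^ 2 ≤ frobSq X := by
  rw [Finset.sum_comm]
  apply Finset.sum_le_sum
  intro i _
  set r : EuclideanSpace ℝ n := (WithLp.equiv 2 _).symm (fun l => X i l) with hr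
  have h1 : ∀ j, X.mulVec (v j) i = (inner ℝ (v j) r : ℝ) := by
    intro j
    simp only [PiLp.inner_apply, RCLike.inner_apply, starRingEnd_apply, star_trivial]
    simp only [Matrix.mulVec, dotProduct, hr, WithLp.equiv_symm_apply, PiLp.toLp_apply]
  have h2 : ∑ j : ι, ‖(inner ℝ (v j) r : ℝ)‖ ^ 2 ≤ ‖r‖ ^ 2 := hv.sum_inner_products_le r
  have h3 : ‖r‖ ^ 2 = ∑ l, (X i l) ^ 2 := by
    rw [← real_inner_self_eq_norm_sq]
    simp only [PiLp.inner_apply, RCLike.inner_apply, starRingEnd_apply, star_trivial, hr,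
      WithLp.equiv_symm_apply, PiLp.toLp_apply]
    exact Finset.sum_congr rfl fun l _ => (sq _).symm
  calc ∑ j : ι, (X.mulVec (v j) i) ^ 2 = ∑ j : ι, ‖(inner ℝ (v j) r : ℝ)‖ ^ 2 := by
        refine Finset.sum_congr rfl fun j _ => ?_
        rw [h1 j, Real.norm_eq_abs, sq_abs]
    _ ≤ ‖r‖ ^ 2 := h2
    _ = ∑ l, (X i l) ^ 2 := h3

lemma A_mulVec_lb (k p : ℕ) (α : ℝ) (hα0 : 0 ≤ α) (hα1 : α < 1)
    (B : Matrix (Fin p) (Fin p) ℝ)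
    (hB : B = (1 - α) • (1 : Matrix (Fin p) (Fin p) ℝ) +
            α • Matrix.of (fun _ _ => (1 : ℝ)))
    (A : Matrix (Fin p × Fin k) (Fin p × Fin k) ℝ)
    (hA : A = Matrix.blockDiagonal (fun _ : Fin k => B))
    (u : Fin p × Fin k → ℝ) :
    (1 - α) ^ 2 * (∑ l, u l ^ 2) ≤ ∑ i, (A.mulVec u i) ^ 2 := by
  have hmv : ∀ x : Fin p × Fin k,
      A.mulVec u x = (1 - α) * u x + α * (∑ j, u (j, x.2)) := by
    rintro ⟨i, b⟩
    subst hA hB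
    simp only [Matrix.mulVec, dotProduct, Fintype.sum_prod_type,
      Matrix.blockDiagonal_apply, Matrix.add_apply, Matrix.smul_apply,
      Matrix.one_apply, Matrix.of_apply, smul_eq_mul, mul_one, ite_mul, zero_mul,
      Finset.sum_ite_eq, Finset.mem_univ, if_true]
    simp only [mul_ite, mul_one, mul_zero, add_mul, Finset.sum_add_distrib,
      Finset.sum_ite_eq, Finset.mem_univ, if_true, Finset.mul_sum]
    simp [ite_mul, zero_mul, Finset.sum_ite_eq]
  have key : ∀ b : Fin k,
      (1 - α) ^ 2 * (∑ i, u (i, b) ^ 2) ≤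
        ∑ i, ((1 - α) * u (i, b) + α * (∑ j, u (j, b))) ^ 2 := by
    intro b
    have expand : ∑ i : Fin p, ((1 - α) * u (i, b) + α * (∑ j, u (j, b))) ^ 2
        = (1 - α) ^ 2 * (∑ i, u (i, b) ^ 2)
          + (2 * (1 - α) * α) * (∑ j, u (j, b)) ^ 2
          + (α ^ 2 * p) * (∑ j, u (j, b)) ^ 2 := by
      have h : ∀ i : Fin p, ((1 - α) * u (i, b) + α * (∑ j, u (j, b))) ^ 2
          = (1 - α) ^ 2 * u (i, b) ^ 2
            + (2 * (1 - α) * α * (∑ j, u (j, b))) * u (i, b)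
            + α ^ 2 * (∑ j, u (j, b)) ^ 2 := fun i => by ring
      rw [Finset.sum_congr rfl fun i _ => h i, Finset.sum_add_distrib,
        Finset.sum_add_distrib, ← Finset.mul_sum, ← Finset.mul_sum,
        Finset.sum_const, Finset.card_univ, Fintype.card_fin, nsmul_eq_mul]
      ring
    rw [expand]
    have hs := sq_nonneg (∑ j, u (j, b))
    have h1 : 0 ≤ 2 * (1 - α) * α * (∑ j, u (j, b)) ^ 2 :=
      mul_nonneg (mul_nonneg (mul_nonneg (by norm_num) (by linarith)) hα0) hs
    have h2 : 0 ≤ α ^ 2 * (p : ℝ) * (∑ j, u (j, b)) ^ 2 := by positivity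
    linarith
  calc (1 - α) ^ 2 * (∑ l, u l ^ 2)
      = ∑ b : Fin k, (1 - α) ^ 2 * (∑ i, u (i, b) ^ 2) := by
        rw [← Finset.mul_sum, Fintype.sum_prod_type, Finset.sum_comm]
    _ ≤ ∑ b : Fin k, ∑ i, ((1 - α) * u (i, b) + α * (∑ j, u (j, b))) ^ 2 :=
        Finset.sum_le_sum fun b _ => key b
    _ = ∑ i, (A.mulVec u i) ^ 2 := by
        simp only [hmv]
        rw [Fintype.sum_prod_type, Finset.sum_comm]

lemma frobSq_lb (k p : ℕ) (hk : 0 < k) (hp : 0 < p)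
    (α : ℝ) (hα0 : 0 ≤ α) (hα1 : α < 1)
    (B : Matrix (Fin p) (Fin p) ℝ)
    (hB : B = (1 - α) • (1 : Matrix (Fin p) (Fin p) ℝ) +
            α • Matrix.of (fun _ _ => (1 : ℝ)))
    (A : Matrix (Fin p × Fin k) (Fin p × Fin k) ℝ)
    (hA : A = Matrix.blockDiagonal (fun _ : Fin k => B))
    (M : Matrix (Fin p × Fin k) (Fin p × Fin k) ℝ) (hM : M.rank ≤ k) :
    (1 - α) ^ 2 * ((k : ℝ) * p - k) ≤ frobSq (A - M) := by
  classical
  set T := Matrix.toEuclideanLin M with hT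
  set K := LinearMap.ker T with hK
  have hrank : M.rank = Module.finrank ℝ (LinearMap.range T) := by
    rw [Matrix.rank_eq_finrank_range_toLin M (PiLp.basisFun 2 ℝ (Fin p × Fin k))
      (PiLp.basisFun 2 ℝ (Fin p × Fin k))]
    rfl
  have hrn : Module.finrank ℝ (LinearMap.range T) + Module.finrank ℝ K = p * k := by
    rw [LinearMap.finrank_range_add_finrank_ker T, finrank_euclideanSpace]
    simp [Fintype.card_prod]
  set d := Module.finrank ℝ K with hd
  have hdn : p * k - k ≤ d := by omega
  let b := stdOrthonormalBasis ℝ K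
  let v : Fin d → EuclideanSpace ℝ (Fin p × Fin k) := fun j => (K.subtypeₗᵢ ∘ b) j
  have hv : Orthonormal ℝ v := b.orthonormal.comp_linearIsometry K.subtypeₗᵢ
  have hker : ∀ j, M.mulVec (v j) = 0 := fun j => congrArg WithLp.ofLp (LinearMap.mem_ker.mp (b j).2)
  have hunit : ∀ j, ∑ l, (v j) l ^ 2 = 1 := by
    intro j
    have hn : ‖v j‖ = 1 := hv.1 j
    have h := real_inner_self_eq_norm_sq (v j)
    rw [hn, one_pow] at h
    simp only [PiLp.inner_apply, RCLike.inner_apply, starRingEnd_apply, star_trivial] at h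
    rw [← h]
    exact Finset.sum_congr rfl fun l _ => pow_two _
  have step : ∀ j, (1 - α) ^ 2 ≤ ∑ i, ((A - M).mulVec (v j) i) ^ 2 := by
    intro j
    have heq : (A - M).mulVec (v j) = A.mulVec (v j) := by
      rw [Matrix.sub_mulVec, hker j, sub_zero]
    rw [heq]
    have h := A_mulVec_lb k p α hα0 hα1 B hB A hA (v j)
    rwa [hunit j, mul_one] at h
  have hcast : (k : ℝ) * p - k ≤ d := by
    have h2 : ((p * k - k : ℕ) : ℝ) ≤ d := Nat.cast_le.mpr hdn
    rw [Nat.cast_sub (Nat.le_mul_of_pos_left k hp)] at h2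
    push_cast at h2 ⊢
    linarith
  calc (1 - α) ^ 2 * ((k : ℝ) * p - k)
      ≤ (1 - α) ^ 2 * d := mul_le_mul_of_nonneg_left hcast (sq_nonneg _)
    _ = ∑ _j : Fin d, (1 - α) ^ 2 := by
        rw [Finset.sum_const, Finset.card_univ, Fintype.card_fin, nsmul_eq_mul]; ring
    _ ≤ ∑ j, ∑ i, ((A - M).mulVec (v j) i) ^ 2 := Finset.sum_le_sum fun j _ => step j
    _ ≤ frobSq (A - M) := sum_mulVec_sq_le_frobSq (A - M) v hv

lemma upper_witness (k p : ℕ) (hk : 0 < k) (hp : 0 < p)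
    (α : ℝ) (hα0 : 0 ≤ α) (hα1 : α < 1)
    (B : Matrix (Fin p) (Fin p) ℝ)
    (hB : B = (1 - α) • (1 : Matrix (Fin p) (Fin p) ℝ) +
            α • Matrix.of (fun _ _ => (1 : ℝ)))
    (A : Matrix (Fin p × Fin k) (Fin p × Fin k) ℝ)
    (hA : A = Matrix.blockDiagonal (fun _ : Fin k => B)) :
    ∃ M : Matrix (Fin p × Fin k) (Fin p × Fin k) ℝ, M.rank ≤ k ∧
      frobNorm (A - M) = (1 - α) * Real.sqrt ((k : ℝ) * p - k) := by
  classical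
  have hpR : (p : ℝ) ≠ 0 := Nat.cast_ne_zero.mpr hp.ne'
  set c : ℝ := (1 - α + α * p) / p with hc
  set P : Matrix (Fin p × Fin k) (Fin k) ℝ :=
    Matrix.of (fun x d => if x.2 = d then c else 0) with hP
  set Q : Matrix (Fin k) (Fin p × Fin k) ℝ :=
    Matrix.of (fun d y => if y.2 = d then 1 else 0) with hQ
  refine ⟨P * Q, ?_, ?_⟩
  · exact (Matrix.rank_mul_le_left P Q).trans
      ((Matrix.rank_le_card_width P).trans_eq (Fintype.card_fin k))
  · have hPQ : ∀ x y : Fin p × Fin k, (P * Q) x y = if x.2 = y.2 then c else 0 := by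
      intro x y
      rw [Matrix.mul_apply]
      rw [Finset.sum_eq_single x.2]
      · simp only [hP, hQ, Matrix.of_apply, if_pos rfl]
        rcases eq_or_ne x.2 y.2 with h | h
        · simp [h]
        · simp [h, Ne.symm h]
      · intro d _ hd
        simp [hP, Matrix.of_apply, Ne.symm hd]
      · intro h; exact absurd (Finset.mem_univ _) h
    have hent : ∀ x y : Fin p × Fin k, (A - P * Q) x y =
        if x.2 = y.2 then (if x.1 = y.1 then 1 - c else α - c) else 0 := by
      rintro ⟨i, b⟩ ⟨j, b'⟩
      rw [Matrix.sub_apply, hPQ, hA, hB]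
      rw [Matrix.blockDiagonal_apply]
      simp only [Matrix.add_apply, Matrix.smul_apply, Matrix.one_apply, Matrix.of_apply,
        smul_eq_mul, mul_one]
      by_cases h1 : b = b' <;> by_cases h2 : i = j <;> simp [h1, h2] <;> ring
    have hsq : frobSq (A - P * Q) = (1 - α) ^ 2 * ((k : ℝ) * p - k) := by
      unfold frobSq
      have hterm : ∀ x y : Fin p × Fin k, ((A - P * Q) x y) ^ 2 =
          if x.2 = y.2 then (if x.1 = y.1 then (1 - c) ^ 2 else (α - c) ^ 2) else 0 := by
        intro x y
        rw [hent x y]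
        split_ifs <;> ring
      calc ∑ x, ∑ y, ((A - P * Q) x y) ^ 2
          = ∑ x : Fin p × Fin k, ∑ j : Fin p,
              (if x.1 = j then (1 - c) ^ 2 else (α - c) ^ 2) := by
            refine Finset.sum_congr rfl fun x _ => ?_
            rw [Fintype.sum_prod_type, Finset.sum_comm]
            rw [Finset.sum_eq_single x.2]
            · exact Finset.sum_congr rfl fun j _ => by rw [hterm x (j, x.2)]; simp
            · intro b' _ hb'
              refine Finset.sum_eq_zero fun j _ => ?_
              rw [hterm x (j, b')]; simp [Ne.symm hb']
            · intro h; exact absurd (Finset.mem_univ _) h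
        _ = ∑ x : Fin p × Fin k, ((1 - c) ^ 2 + ((p : ℝ) - 1) * (α - c) ^ 2) := by
            refine Finset.sum_congr rfl fun x _ => ?_
            have : ∀ j : Fin p, (if x.1 = j then (1 - c) ^ 2 else (α - c) ^ 2)
                = (α - c) ^ 2 + (if x.1 = j then (1 - c) ^ 2 - (α - c) ^ 2 else 0) := by
              intro j; split_ifs <;> ring
            rw [Finset.sum_congr rfl fun j _ => this j, Finset.sum_add_distrib,
              Finset.sum_const, Finset.card_univ, Fintype.card_fin, nsmul_eq_mul,
              Finset.sum_ite_eq]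
            simp; ring
        _ = (1 - α) ^ 2 * ((k : ℝ) * p - k) := by
            rw [Finset.sum_const, Finset.card_univ, Fintype.card_prod,
              Fintype.card_fin, Fintype.card_fin, nsmul_eq_mul]
            push_cast
            rw [hc]
            field_simp
            ring
    have hnn : (0 : ℝ) ≤ 1 - α := by linarith
    rw [frobNorm, hsq, Real.sqrt_mul (sq_nonneg _), Real.sqrt_sq hnn]

/-- For `B = (1−α) I_p + α J_p` and `A` the `m × m`
block-diagonal matrix (`m = k p`) with `k` diagonal blocks equal to `B`, the
best rank-`k` approximation error of `A` in Frobenius norm is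
`(1 − α) √(m − k)`. -/
theorem best_rank_k_error_block_diagonal (k p : ℕ) (hk : 0 < k) (hp : 0 < p)
    (α : ℝ) (hα0 : 0 ≤ α) (hα1 : α < 1)
    (B : Matrix (Fin p) (Fin p) ℝ)
    (hB : B = (1 - α) • (1 : Matrix (Fin p) (Fin p) ℝ) +
            α • Matrix.of (fun _ _ => (1 : ℝ)))
    (A : Matrix (Fin p × Fin k) (Fin p × Fin k) ℝ)
    (hA : A = Matrix.blockDiagonal (fun _ : Fin k => B)) :
    sInf {x : ℝ | ∃ M : Matrix (Fin p × Fin k) (Fin p × Fin k) ℝ,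
            M.rank ≤ k ∧ x = frobNorm (A - M)} =
      (1 - α) * Real.sqrt ((k : ℝ) * p - k) := by
  obtain ⟨M₀, hM₀r, hM₀⟩ := upper_witness k p hk hp α hα0 hα1 B hB A hA
  have hmem : (1 - α) * Real.sqrt ((k : ℝ) * p - k) ∈
      {x : ℝ | ∃ M : Matrix (Fin p × Fin k) (Fin p × Fin k) ℝ,
        M.rank ≤ k ∧ x = frobNorm (A - M)} := ⟨M₀, hM₀r, hM₀.symm⟩
  have hlb : ∀ x ∈ {x : ℝ | ∃ M : Matrix (Fin p × Fin k) (Fin p × Fin k) ℝ,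
      M.rank ≤ k ∧ x = frobNorm (A - M)},
      (1 - α) * Real.sqrt ((k : ℝ) * p - k) ≤ x := by
    rintro x ⟨M, hMr, rfl⟩
    have h := frobSq_lb k p hk hp α hα0 hα1 B hB A hA M hMr
    have h2 := Real.sqrt_le_sqrt h
    rwa [Real.sqrt_mul (sq_nonneg _), Real.sqrt_sq (by linarith)] at h2
  exact le_antisymm (csInf_le ⟨_, hlb⟩ hmem) (le_csInf ⟨_, hmem⟩ hlb)
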